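/- Let (n_k) be a strictly increasing sequence of positive integers with n_{k+1} > 2^{n_k} for all k, and let α = ∑_{k=0}^∞ 2^{-n_k}. Then for every sufficiently large k, setting q_k = 2^{n_k} and a_k = 2^{n_k} ∑_{l=0}^k 2^{-n_l}, one has a_k ∈ ℕ and 0 < |q_k α - a_k| < q_k^{-k}. -/
import Mathlib

lemma sq_add_one_le_two_pow : ∀ m : ℕ, 5 ≤ m → m ^ 2 + 1 ≤ 2 ^ m := by
  intro m hm
  induction m with
  | zero => omega
  | succ m ih =>
    rcases Nat.lt_or_ge m 5 with h | h
    · interval_cases m <;> omega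
    · have := ih h
      have h2 : 2 ^ (m + 1) = 2 * 2 ^ m := by ring
      nlinarith

lemma strictMono_add_le (n : ℕ → ℕ) (hmono : StrictMono n) (a b : ℕ) :
    n a + b ≤ n (a + b) := by
  induction b with
  | zero => simp
  | succ b ih =>
    have e : a + (b + 1) = a + b + 1 := by omega
    have h : n (a + b) < n (a + b + 1) := hmono (by omega)
    rw [e]
    omega

/-- with `q k = 2 ^ n k` and `a k = ∑_{l ≤ k} 2 ^ (n k - n l)` (a natural
number), for all sufficiently large `k` one has `0 < |q k * α - a k| < (q k)⁻¹ ^ k`. -/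
theorem stmt1 (n : ℕ → ℕ) (hmono : StrictMono n) (h0 : 1 ≤ n 0)
    (hgap : ∀ k, 2 ^ n k < n (k + 1))
    (α : ℝ) (hα : α = ∑' k : ℕ, ((2:ℝ) ^ n k)⁻¹) :
    ∃ K : ℕ, ∀ k, K ≤ k →
      0 < |(2:ℝ) ^ n k * α - ((∑ l ∈ Finset.range (k + 1), 2 ^ (n k - n l) : ℕ) : ℝ)| ∧
      |(2:ℝ) ^ n k * α - ((∑ l ∈ Finset.range (k + 1), 2 ^ (n k - n l) : ℕ) : ℝ)|
        < ((2:ℝ) ^ n k)⁻¹ ^ k := by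
  -- basic growth of n
  have hnk : ∀ k, k + 1 ≤ n k := by
    intro k
    induction k with
    | zero => simpa using h0
    | succ k ih =>
      have h2 : n k < n (k + 1) := hmono (Nat.lt_succ_self k)
      omega
  set f : ℕ → ℝ := fun l => ((2:ℝ) ^ n l)⁻¹ with hf
  have hfpos : ∀ l, 0 < f l := fun l => by positivity
  have hsum : Summable f := by
    apply Summable.of_nonneg_of_le (fun l => (hfpos l).le)
      (fun l => ?_) summable_geometric_two
    have : (2:ℝ) ^ l ≤ 2 ^ n l := by
      exact pow_le_pow_right₀ one_le_two (le_of_lt (Nat.lt_of_lt_of_le (Nat.lt_succ_self l) (hnk l)))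
    rw [one_div, inv_pow]
    rw [← inv_pow]
    calc ((2:ℝ) ^ n l)⁻¹ ≤ ((2:ℝ) ^ l)⁻¹ := by
          apply inv_anti₀ (by positivity) this
      _ = (2:ℝ)⁻¹ ^ l := by rw [inv_pow]
  use 4
  intro k hk
  have hnk5 : 5 ≤ n k := le_trans (by omega) (hnk k)
  -- the key identity
  have hcast : ((∑ l ∈ Finset.range (k + 1), 2 ^ (n k - n l) : ℕ) : ℝ)
      = (2:ℝ) ^ n k * ∑ l ∈ Finset.range (k + 1), f l := by
    push_cast
    rw [Finset.mul_sum]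
    apply Finset.sum_congr rfl
    intro l hl
    have hle : n l ≤ n k := hmono.monotone (Nat.lt_succ_iff.mp (Finset.mem_range.mp hl))
    rw [pow_sub₀ (2:ℝ) two_ne_zero hle]
  have hsplit : α = ∑ l ∈ Finset.range (k + 1), f l + ∑' l, f (l + (k + 1)) := by
    rw [hα, ← Summable.sum_add_tsum_nat_add (k + 1) hsum]
  have hsumtail : Summable (fun l => f (l + (k + 1))) :=
    (summable_nat_add_iff (k + 1)).2 hsum
  have key : (2:ℝ) ^ n k * α - ((∑ l ∈ Finset.range (k + 1), 2 ^ (n k - n l) : ℕ) : ℝ)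
      = (2:ℝ) ^ n k * ∑' l, f (l + (k + 1)) := by
    rw [hcast, hsplit]; ring
  have hTpos : 0 < ∑' l, f (l + (k + 1)) :=
    Summable.tsum_pos hsumtail (fun l => (hfpos _).le) 0 (hfpos _)
  have hDpos : 0 < (2:ℝ) ^ n k * ∑' l, f (l + (k + 1)) := by positivity
  -- upper bound on the tail
  have hTle : ∑' l, f (l + (k + 1)) ≤ ((2:ℝ) ^ n (k + 1))⁻¹ * 2 := by
    have hg : Summable (fun l : ℕ => ((2:ℝ) ^ n (k + 1))⁻¹ * (1 / 2) ^ l) :=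
      summable_geometric_two.mul_left _
    have hle : ∀ l : ℕ, f (l + (k + 1)) ≤ ((2:ℝ) ^ n (k + 1))⁻¹ * (1 / 2) ^ l := by
      intro l
      have h1 : n (k + 1) + l ≤ n (l + (k + 1)) := by
        have := strictMono_add_le n hmono (k + 1) l
        rwa [Nat.add_comm (k+1) l] at this
      have h2 : (2:ℝ) ^ (n (k + 1) + l) ≤ 2 ^ n (l + (k + 1)) :=
        pow_le_pow_right₀ one_le_two h1
      have h3 : f (l + (k + 1)) ≤ ((2:ℝ) ^ (n (k + 1) + l))⁻¹ :=
        inv_anti₀ (by positivity) h2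
      calc f (l + (k + 1)) ≤ ((2:ℝ) ^ (n (k + 1) + l))⁻¹ := h3
        _ = ((2:ℝ) ^ n (k + 1))⁻¹ * (1 / 2) ^ l := by
            rw [pow_add, mul_inv, one_div, inv_pow]
    calc ∑' l, f (l + (k + 1)) ≤ ∑' l : ℕ, ((2:ℝ) ^ n (k + 1))⁻¹ * (1 / 2) ^ l :=
          Summable.tsum_le_tsum hle hsumtail hg
      _ = ((2:ℝ) ^ n (k + 1))⁻¹ * ∑' l : ℕ, ((1:ℝ) / 2) ^ l := tsum_mul_left
      _ = ((2:ℝ) ^ n (k + 1))⁻¹ * 2 := by rw [tsum_geometric_two]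
  -- exponent inequality
  have hexp : n k + 1 + n k * k < n (k + 1) := by
    have h1 : 2 ^ n k < n (k + 1) := hgap k
    have h2 : n k ^ 2 + 1 ≤ 2 ^ n k := sq_add_one_le_two_pow (n k) hnk5
    have h3 : k + 1 ≤ n k := hnk k
    nlinarith [sq_nonneg (n k)]
  have hbound : (2:ℝ) ^ n k * ∑' l, f (l + (k + 1)) < ((2:ℝ) ^ n k)⁻¹ ^ k := by
    have h1 : (2:ℝ) ^ n k * ∑' l, f (l + (k + 1))
        ≤ (2:ℝ) ^ n k * (((2:ℝ) ^ n (k + 1))⁻¹ * 2) := by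
      apply mul_le_mul_of_nonneg_left hTle (by positivity)
    refine lt_of_le_of_lt h1 ?_
    have hrw : ((2:ℝ) ^ n k)⁻¹ ^ k = ((2:ℝ) ^ (n k * k))⁻¹ := by
      rw [inv_pow, ← pow_mul]
    rw [hrw]
    have heq : (2:ℝ) ^ n k * (((2:ℝ) ^ n (k + 1))⁻¹ * 2) = 2 ^ (n k + 1) / 2 ^ n (k + 1) := by
      rw [pow_succ]; field_simp
    rw [heq, div_lt_iff₀ (by positivity), ← one_div, div_mul_eq_mul_div, lt_div_iff₀ (by positivity),
      one_mul, ← pow_add]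
    exact pow_lt_pow_right₀ one_lt_two (by omega)
  rw [key, abs_of_pos hDpos]
  exact ⟨hDpos, hbound⟩
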